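/- Let a ≥ 0 and b ≥ 0 satisfy a + b/(1−a)² < 1 with a < 1. Then the map T on bounded real sequences (μ_k)_{k≥0} defined by (Tμ)_k = a^k μ_0' + ∑_{j=0}^{k−1} a^{k−j−1} b ∑_{r=j+1}^∞ a^{r−j−1} μ_r (with fixed μ_0') is a contraction in the sup norm with Lipschitz constant at most a + b/(1−a)², and hence has a unique fixed point. -/

import Mathlib

/-- Contraction property of the scalar mean-field consistency operator: if
`a + b/(1-a)² < 1` with `0 ≤ a < 1`, `0 ≤ b`, then the map
`(Tμ)_k = a^k μ₀' + ∑_{j<k} a^{k-j-1} b ∑_{r=0}^∞ a^r μ_{j+1+r}` on bounded sequences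
is Lipschitz with constant `a + b/(1-a)²` in the sup norm, and hence has a unique
fixed point. -/
theorem stmt_13 (a b μ0' : ℝ) (ha0 : 0 ≤ a) (ha1 : a < 1) (hb : 0 ≤ b)
    (hcontr : a + b / (1 - a) ^ 2 < 1)
    (T : BoundedContinuousFunction ℕ ℝ → BoundedContinuousFunction ℕ ℝ)
    (hT : ∀ (μ : BoundedContinuousFunction ℕ ℝ) (k : ℕ),
      T μ k = a ^ k * μ0' +
        ∑ j ∈ Finset.range k, a ^ (k - j - 1) * b * ∑' r : ℕ, a ^ r * μ (j + 1 + r)) :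
    LipschitzWith (Real.toNNReal (a + b / (1 - a) ^ 2)) T ∧ ∃! μ, T μ = μ := by
  have ha1' : 0 < 1 - a := by linarith
  set c := a + b / (1 - a) ^ 2 with hc
  have hc0 : 0 ≤ c := by positivity
  have hsumm : ∀ (μ : BoundedContinuousFunction ℕ ℝ) (j : ℕ),
      Summable (fun r : ℕ => a ^ r * μ (j + 1 + r)) := by
    intro μ j
    apply Summable.of_norm_bounded (g := fun r => ‖μ‖ * a ^ r)
      ((summable_geometric_of_lt_one ha0 ha1).mul_left _)
    intro r
    rw [norm_mul, norm_pow, Real.norm_of_nonneg ha0, mul_comm]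
    exact mul_le_mul_of_nonneg_right (μ.norm_coe_le_norm _) (pow_nonneg ha0 r)
  have key : ∀ μ ν : BoundedContinuousFunction ℕ ℝ,
      dist (T μ) (T ν) ≤ c * dist μ ν := by
    intro μ ν
    have hD : 0 ≤ dist μ ν := dist_nonneg
    refine (BoundedContinuousFunction.dist_le (by positivity)).mpr ?_
    intro k
    rw [hT, hT, Real.dist_eq, add_sub_add_left_eq_sub, ← Finset.sum_sub_distrib]
    have step : ∀ j ∈ Finset.range k,
        |a ^ (k - j - 1) * b * (∑' r : ℕ, a ^ r * μ (j + 1 + r))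
          - a ^ (k - j - 1) * b * (∑' r : ℕ, a ^ r * ν (j + 1 + r))|
        ≤ a ^ (k - j - 1) * (b * (dist μ ν / (1 - a))) := by
      intro j _
      rw [← mul_sub, ← Summable.tsum_sub (hsumm μ j) (hsumm ν j)]
      have h1 : |∑' r : ℕ, (a ^ r * μ (j + 1 + r) - a ^ r * ν (j + 1 + r))|
          ≤ dist μ ν / (1 - a) := by
        have hs : Summable (fun r : ℕ => a ^ r * μ (j + 1 + r) - a ^ r * ν (j + 1 + r)) :=
          (hsumm μ j).sub (hsumm ν j)
        calc |∑' r : ℕ, (a ^ r * μ (j + 1 + r) - a ^ r * ν (j + 1 + r))|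
            = ‖∑' r : ℕ, (a ^ r * μ (j + 1 + r) - a ^ r * ν (j + 1 + r))‖ :=
              (Real.norm_eq_abs _).symm
          _ ≤ ∑' r : ℕ, ‖a ^ r * μ (j + 1 + r) - a ^ r * ν (j + 1 + r)‖ :=
              norm_tsum_le_tsum_norm (by simpa only [Real.norm_eq_abs] using hs.abs)
          _ = ∑' r : ℕ, |a ^ r * μ (j + 1 + r) - a ^ r * ν (j + 1 + r)| := by
              simp only [Real.norm_eq_abs]
          _ ≤ ∑' r : ℕ, a ^ r * dist μ ν := by
              refine Summable.tsum_le_tsum ?_ hs.abs ((summable_geometric_of_lt_one ha0 ha1).mul_right _)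
              intro r
              rw [← mul_sub, abs_mul, abs_pow, abs_of_nonneg ha0]
              refine mul_le_mul_of_nonneg_left ?_ (pow_nonneg ha0 r)
              rw [← Real.dist_eq]
              exact BoundedContinuousFunction.dist_coe_le_dist _
          _ = dist μ ν / (1 - a) := by
              rw [tsum_mul_right, tsum_geometric_of_lt_one ha0 ha1]
              rw [div_eq_mul_inv, mul_comm]
      calc |a ^ (k - j - 1) * b * (∑' r : ℕ, (a ^ r * μ (j + 1 + r) - a ^ r * ν (j + 1 + r)))|
          = a ^ (k - j - 1) * b * |∑' r : ℕ, (a ^ r * μ (j + 1 + r) - a ^ r * ν (j + 1 + r))| := by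
            rw [abs_mul, abs_of_nonneg (by positivity : (0:ℝ) ≤ a ^ (k - j - 1) * b)]
        _ ≤ a ^ (k - j - 1) * b * (dist μ ν / (1 - a)) :=
            mul_le_mul_of_nonneg_left h1 (by positivity)
        _ = a ^ (k - j - 1) * (b * (dist μ ν / (1 - a))) := by ring
    calc |∑ j ∈ Finset.range k,
          (a ^ (k - j - 1) * b * (∑' r : ℕ, a ^ r * μ (j + 1 + r))
            - a ^ (k - j - 1) * b * (∑' r : ℕ, a ^ r * ν (j + 1 + r)))|
        ≤ ∑ j ∈ Finset.range k,
          |a ^ (k - j - 1) * b * (∑' r : ℕ, a ^ r * μ (j + 1 + r))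
            - a ^ (k - j - 1) * b * (∑' r : ℕ, a ^ r * ν (j + 1 + r))| :=
          Finset.abs_sum_le_sum_abs _ _
      _ ≤ ∑ j ∈ Finset.range k, a ^ (k - j - 1) * (b * (dist μ ν / (1 - a))) :=
          Finset.sum_le_sum step
      _ = (∑ j ∈ Finset.range k, a ^ (k - j - 1)) * (b * (dist μ ν / (1 - a))) := by
          rw [Finset.sum_mul]
      _ ≤ (1 - a)⁻¹ * (b * (dist μ ν / (1 - a))) := by
          refine mul_le_mul_of_nonneg_right ?_ (by positivity)
          have h2 : ∑ j ∈ Finset.range k, a ^ (k - j - 1) = ∑ j ∈ Finset.range k, a ^ j := by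
            rw [← Finset.sum_range_reflect (fun j => a ^ j) k]
            exact Finset.sum_congr rfl (fun j hj => by congr 1; omega)
          rw [h2, ← tsum_geometric_of_lt_one ha0 ha1]
          exact Summable.sum_le_tsum _ (fun i _ => pow_nonneg ha0 i)
            (summable_geometric_of_lt_one ha0 ha1)
      _ ≤ c * dist μ ν := by
          rw [hc]
          have h3 : (1 - a)⁻¹ * (b * (dist μ ν / (1 - a))) = b / (1 - a) ^ 2 * dist μ ν := by
            rw [div_eq_mul_inv, div_eq_mul_inv, sq, mul_inv]; ring
          rw [h3]
          nlinarith [mul_nonneg ha0 hD]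
  have hlip : LipschitzWith (Real.toNNReal c) T := by
    apply LipschitzWith.of_dist_le_mul
    intro μ ν
    rw [Real.coe_toNNReal _ hc0]
    exact key μ ν
  refine ⟨hlip, ?_⟩
  have hcontr' : ContractingWith (Real.toNNReal c) T := by
    constructor
    · rw [← Real.toNNReal_one]
      exact (Real.toNNReal_lt_toNNReal_iff one_pos).mpr hcontr
    · exact hlip
  exact ⟨hcontr'.fixedPoint T, hcontr'.fixedPoint_isFixedPt,
    fun y hy => hcontr'.fixedPoint_unique hy⟩
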